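/- Let W = diag(w_1,…,w_{N+1}) be an invertible diagonal matrix, Q any (N+1)×(N+1) real matrix, V_f any 2×(N+1) real matrix, B = diag(-1,1), D = W⁻¹Q, and Q_N = [[Q - (1/2)V_fᵀ B V_f, (1/2)V_fᵀ B],[-(1/2)B V_f, (1/2)B]] the (N+3)×(N+3) decoupled SBP operator. Then for all vectors f, g ∈ ℝ^{N+1} and f_f, g_f ∈ ℝ², writing f_N = (f; f_f) and g_N = (g; g_f), the following identity holds: W⁻¹ [I_{N+1}; V_f]ᵀ diag(f_N) Q_N g_N = diag(f) D g + (1/2) diag(f) W⁻¹ V_fᵀ B (g_f - V_f g) + (1/2) W⁻¹ V_fᵀ B diag(f_f) (g_f - V_f g). -/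

import Mathlib

set_option maxHeartbeats 1000000


open Matrix BigOperators

/-- The "strong form" rewriting of the decoupled SBP approximation: for any nodal values
`f, g` and face values `f_f, g_f`,
`W⁻¹ [I; V_f]ᵀ diag(f_N) Q_N g_N
  = diag(f) D g + (1/2) diag(f) W⁻¹ Vfᵀ B (g_f - V_f g) + (1/2) W⁻¹ Vfᵀ B diag(f_f) (g_f - V_f g)`. -/
theorem decoupled_sbp_strong_form
    (N : ℕ) (w : Fin (N + 1) → ℝ) (hw : ∀ i, w i ≠ 0)
    (W Q D : Matrix (Fin (N + 1)) (Fin (N + 1)) ℝ)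
    (hW : W = Matrix.diagonal w)
    (hD : D = W⁻¹ * Q)
    (Vf : Matrix (Fin 2) (Fin (N + 1)) ℝ)
    (B : Matrix (Fin 2) (Fin 2) ℝ)
    (hB : B = Matrix.diagonal ![(-1 : ℝ), 1])
    (QN : Matrix (Fin (N + 1) ⊕ Fin 2) (Fin (N + 1) ⊕ Fin 2) ℝ)
    (hQN : QN = Matrix.fromBlocks
      (Q - (1 / 2 : ℝ) • (Vfᵀ * B * Vf)) ((1 / 2 : ℝ) • (Vfᵀ * B))
      (-((1 / 2 : ℝ) • (B * Vf))) ((1 / 2 : ℝ) • B)) :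
    ∀ (f g : Fin (N + 1) → ℝ) (ff gf : Fin 2 → ℝ),
      (W⁻¹ * (Matrix.fromRows (1 : Matrix (Fin (N + 1)) (Fin (N + 1)) ℝ) Vf)ᵀ
          * Matrix.diagonal (Sum.elim f ff) * QN) *ᵥ Sum.elim g gf
        = (Matrix.diagonal f * D) *ᵥ g
          + (1 / 2 : ℝ) • ((Matrix.diagonal f * W⁻¹ * Vfᵀ * B) *ᵥ (gf - Vf *ᵥ g))
          + (1 / 2 : ℝ) • ((W⁻¹ * Vfᵀ * B * Matrix.diagonal ff) *ᵥ (gf - Vf *ᵥ g)) := by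
  subst hW hB hQN hD
  intro f g ff gf
  have hWi : (Matrix.diagonal w)⁻¹ = Matrix.diagonal (fun i => (w i)⁻¹) := by
    apply Matrix.inv_eq_right_inv
    rw [Matrix.diagonal_mul_diagonal]
    simp [mul_inv_cancel₀, hw]
  rw [hWi, Matrix.transpose_fromRows, Matrix.transpose_one, ← Matrix.fromBlocks_diagonal,
    Matrix.mul_fromCols, Matrix.fromCols_mul_fromBlocks,
    Matrix.fromCols_mul_fromBlocks, Matrix.fromCols_mulVec_sumElim]
  have hc1 : Matrix.diagonal f * Matrix.diagonal (fun i => (w i)⁻¹)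
      = Matrix.diagonal (fun i => (w i)⁻¹) * Matrix.diagonal f := by
    rw [Matrix.diagonal_mul_diagonal, Matrix.diagonal_mul_diagonal]
    exact congrArg _ (funext fun i => mul_comm _ _)
  have hc2 : ∀ (X : Matrix (Fin (N+1)) (Fin 2) ℝ),
      X * Matrix.diagonal ![(-1:ℝ),1] * Matrix.diagonal ff
        = X * Matrix.diagonal ff * Matrix.diagonal ![(-1:ℝ),1] := by
    intro X
    rw [Matrix.mul_assoc, Matrix.mul_assoc, Matrix.diagonal_mul_diagonal,
      Matrix.diagonal_mul_diagonal]
    exact congrArg _ (congrArg _ (funext fun i => mul_comm _ _))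
  simp only [Matrix.mul_one, Matrix.mul_zero, add_zero, zero_add, Matrix.mul_sub,
    Matrix.sub_mul, Matrix.mul_neg, Matrix.neg_mul, Matrix.mul_smul, Matrix.smul_mul, Matrix.mulVec_sub,
    Matrix.sub_mulVec, Matrix.add_mulVec, Matrix.neg_mulVec, Matrix.smul_mulVec,
    Matrix.mulVec_mulVec, smul_sub, ← Matrix.mul_assoc, hc1, hc2]
  abel
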